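/- The periodic unfolding operator satisfies the exact integration formula: for every φ ∈ L¹(Ω), (1/|Y|) ∫_{Ω×Y} T_ε(φ)(x,y) dx dy = ∫_{Ω_ε⁻} φ(x) dx = ∫_Ω φ dx − ∫_{Λ_ε⁻} φ dx. -/

import Mathlib

open MeasureTheory Set Filter

/-- The reference cell `Y = (−1/2, 1/2]³`. -/
def Ycell : Set (Fin 3 → ℝ) := {y | ∀ i, y i ∈ Set.Ioc (-(1/2) : ℝ) (1/2)}

/-- Integer-part map `[·]_Y : ℝ → ℤ` adapted to `Y = (−1/2,1/2]`: `z − [z]_Y ∈ (−1/2,1/2]`. -/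
noncomputable def nint (z : ℝ) : ℤ := ⌈z - 1/2⌉

/-- The cell `ε(ℓ + Y)`. -/
def cellY (ε : ℝ) (ℓ : Fin 3 → ℤ) : Set (Fin 3 → ℝ) :=
  {x | ∀ i, x i ∈ Set.Ioc (ε * ((ℓ i : ℝ) - 1/2)) (ε * ((ℓ i : ℝ) + 1/2))}

/-- `Ω_ε⁻`: the union of the ε-cells entirely contained in `Ω`. -/
def OmegaMinus (Ω : Set (Fin 3 → ℝ)) (ε : ℝ) : Set (Fin 3 → ℝ) :=
  ⋃ ℓ ∈ {ℓ : Fin 3 → ℤ | cellY ε ℓ ⊆ Ω}, cellY ε ℓ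

/-- The periodic unfolding operator `T_ε`:
`T_ε(φ)(x,y) = φ(ε[x/ε]_Y + εy)` on `Ω_ε⁻ × Y` and `0` on `(Ω \ Ω_ε⁻) × Y`. -/
noncomputable def unfold (ε : ℝ) (Ω : Set (Fin 3 → ℝ)) (φ : (Fin 3 → ℝ) → ℝ)
    (x y : Fin 3 → ℝ) : ℝ :=
  (OmegaMinus Ω ε).indicator (fun x => φ (fun i => ε * (nint (x i / ε) : ℝ) + ε * y i)) x

lemma Ycell_eq : Ycell = Set.univ.pi (fun _ : Fin 3 => Set.Ioc (-(1/2) : ℝ) (1/2)) := by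
  ext y; simp [Ycell, Set.mem_pi]

lemma cellY_eq (ε : ℝ) (ℓ : Fin 3 → ℤ) :
    cellY ε ℓ = Set.univ.pi
      (fun i => Set.Ioc (ε * ((ℓ i : ℝ) - 1/2)) (ε * ((ℓ i : ℝ) + 1/2))) := by
  ext x; simp [cellY, Set.mem_pi]

lemma measurableSet_Ycell : MeasurableSet Ycell := by
  rw [Ycell_eq]; exact MeasurableSet.univ_pi fun i => measurableSet_Ioc

lemma volume_Ycell : volume Ycell = 1 := by
  rw [Ycell_eq, Real.volume_pi_Ioc]
  norm_num

lemma measurableSet_cellY (ε : ℝ) (ℓ : Fin 3 → ℤ) : MeasurableSet (cellY ε ℓ) := by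
  rw [cellY_eq]; exact MeasurableSet.univ_pi fun i => measurableSet_Ioc

lemma volume_cellY {ε : ℝ} (hε : 0 < ε) (ℓ : Fin 3 → ℤ) :
    volume (cellY ε ℓ) = ENNReal.ofReal (ε ^ 3) := by
  rw [cellY_eq, Real.volume_pi_Ioc]
  have h : ∀ i : Fin 3, ε * ((ℓ i : ℝ) + 1/2) - ε * ((ℓ i : ℝ) - 1/2) = ε := by
    intro i; ring
  simp_rw [h]
  rw [Finset.prod_const, Finset.card_univ, Fintype.card_fin, ← ENNReal.ofReal_pow hε.le]

lemma nint_eq_of_mem {ε : ℝ} (hε : 0 < ε) {ℓ : Fin 3 → ℤ} {x : Fin 3 → ℝ}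
    (hx : x ∈ cellY ε ℓ) (i : Fin 3) : nint (x i / ε) = ℓ i := by
  have h := hx i
  rw [Set.mem_Ioc] at h
  have h1 : (ℓ i : ℝ) - 1/2 < x i / ε := by
    rw [lt_div_iff₀ hε]; nlinarith [h.1]
  have h2 : x i / ε ≤ (ℓ i : ℝ) + 1/2 := by
    rw [div_le_iff₀ hε]; nlinarith [h.2]
  rw [nint, Int.ceil_eq_iff]
  constructor <;> push_cast <;> linarith

lemma cellY_disjoint {ε : ℝ} (hε : 0 < ε) {ℓ ℓ' : Fin 3 → ℤ} (h : ℓ ≠ ℓ') :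
    Disjoint (cellY ε ℓ) (cellY ε ℓ') := by
  rw [Set.disjoint_left]
  intro x hx hx'
  apply h; funext i
  rw [← nint_eq_of_mem hε hx i, ← nint_eq_of_mem hε hx' i]

lemma mem_cellY_iff {ε : ℝ} (hε : 0 < ε) (ℓ : Fin 3 → ℤ) (y : Fin 3 → ℝ) :
    y ∈ Ycell ↔ ((fun i => ε * (ℓ i : ℝ)) + ε • y) ∈ cellY ε ℓ := by
  constructor
  · intro hy i
    have h := hy i
    rw [Set.mem_Ioc] at h ⊢
    simp only [Pi.add_apply, Pi.smul_apply, smul_eq_mul]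
    constructor
    · nlinarith [h.1]
    · nlinarith [h.2]
  · intro hx i
    have h := hx i
    simp only [Pi.add_apply, Pi.smul_apply, smul_eq_mul, Set.mem_Ioc] at h
    rw [Set.mem_Ioc]
    constructor
    · nlinarith [h.1]
    · nlinarith [h.2]

lemma integral_Ycell {ε : ℝ} (hε : 0 < ε) (ℓ : Fin 3 → ℤ) (φ : (Fin 3 → ℝ) → ℝ) :
    ∫ y in Ycell, φ (fun i => ε * (ℓ i : ℝ) + ε * y i)
      = (ε ^ 3)⁻¹ * ∫ x in cellY ε ℓ, φ x := by
  set c : Fin 3 → ℝ := fun i => ε * (ℓ i : ℝ) with hc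
  set g : (Fin 3 → ℝ) → ℝ := (cellY ε ℓ).indicator φ with hg
  have key : ∀ y : Fin 3 → ℝ,
      Ycell.indicator (fun y => φ (fun i => ε * (ℓ i : ℝ) + ε * y i)) y = g (c + ε • y) := by
    intro y
    by_cases hy : y ∈ Ycell
    · rw [Set.indicator_of_mem hy, hg, Set.indicator_of_mem ((mem_cellY_iff hε ℓ y).1 hy)]
      congr 1
    · rw [Set.indicator_of_notMem hy, hg,
        Set.indicator_of_notMem (fun hm => hy ((mem_cellY_iff hε ℓ y).2 hm))]
  rw [← integral_indicator measurableSet_Ycell]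
  simp_rw [key]
  have h1 : ∫ y, g (c + ε • y) = ∫ y, (fun z => g (c + z)) (ε • y) := rfl
  rw [h1, Measure.integral_comp_smul volume (fun z => g (c + z)) ε]
  rw [integral_add_left_eq_self (fun z => g z) c]
  have h2 : ∫ z, g z = ∫ x in cellY ε ℓ, φ x := integral_indicator (measurableSet_cellY ε ℓ)
  rw [h2, Module.finrank_fin_fun]
  rw [abs_of_nonneg (inv_nonneg.2 (pow_nonneg hε.le 3))]
  rw [smul_eq_mul]

lemma OmegaMinus_subset (Ω : Set (Fin 3 → ℝ)) (ε : ℝ) : OmegaMinus Ω ε ⊆ Ω :=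
  Set.iUnion₂_subset fun _ h => h

lemma measurableSet_OmegaMinus (Ω : Set (Fin 3 → ℝ)) (ε : ℝ) :
    MeasurableSet (OmegaMinus Ω ε) :=
  MeasurableSet.biUnion (Set.to_countable _) fun ℓ _ => measurableSet_cellY ε ℓ

/-- Exact integration formula for the periodic unfolding operator: for `φ ∈ L¹(Ω)`,
`(1/|Y|) ∫_{Ω×Y} T_ε(φ) dx dy = ∫_{Ω_ε⁻} φ dx = ∫_Ω φ dx − ∫_{Λ_ε⁻} φ dx`. -/
theorem stmt6 (Ω : Set (Fin 3 → ℝ)) (hΩo : IsOpen Ω) (hΩb : Bornology.IsBounded Ω)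
    (ε : ℝ) (hε : 0 < ε) (φ : (Fin 3 → ℝ) → ℝ) (hφ : IntegrableOn φ Ω) :
    (volume Ycell).toReal⁻¹ * (∫ x in Ω, ∫ y in Ycell, unfold ε Ω φ x y)
        = ∫ x in OmegaMinus Ω ε, φ x ∧
      ∫ x in OmegaMinus Ω ε, φ x = (∫ x in Ω, φ x) - ∫ x in Ω \ OmegaMinus Ω ε, φ x := by
  have hsub := OmegaMinus_subset Ω ε
  have hmeas := measurableSet_OmegaMinus Ω ε
  -- the index set of cells inside Ω is finite
  set S : Set (Fin 3 → ℤ) := {ℓ : Fin 3 → ℤ | cellY ε ℓ ⊆ Ω} with hS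
  obtain ⟨R, hR⟩ := hΩb.subset_closedBall 0
  have hSfin : S.Finite := by
    have hsub2 : S ⊆ Set.univ.pi (fun _ : Fin 3 => Set.Icc (-⌈R / ε⌉) ⌈R / ε⌉) := by
      intro ℓ hℓ
      have hp : (fun i => ε * (ℓ i : ℝ)) ∈ cellY ε ℓ := by
        intro i
        rw [Set.mem_Ioc]
        constructor <;> nlinarith
      have hpΩ : (fun i => ε * (ℓ i : ℝ)) ∈ Metric.closedBall (0 : Fin 3 → ℝ) R :=
        hR (hℓ hp)
      rw [Metric.mem_closedBall, dist_zero_right] at hpΩ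
      intro i _
      have hcomp : |ε * (ℓ i : ℝ)| ≤ R := by
        have := norm_le_pi_norm (G := fun _ : Fin 3 => ℝ) (fun i => ε * (ℓ i : ℝ)) i
        rw [Real.norm_eq_abs] at this
        exact this.trans hpΩ
      have habs : |(ℓ i : ℝ)| ≤ R / ε := by
        rw [le_div_iff₀ hε]
        calc |(ℓ i : ℝ)| * ε = |ε * (ℓ i : ℝ)| := by
              rw [abs_mul, abs_of_pos hε]; ring
          _ ≤ R := hcomp
      have hceil : R / ε ≤ (⌈R / ε⌉ : ℝ) := Int.le_ceil _
      rw [abs_le] at habs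
      constructor
      · have : -(⌈R / ε⌉ : ℝ) ≤ (ℓ i : ℝ) := by linarith
        exact_mod_cast this
      · have : (ℓ i : ℝ) ≤ (⌈R / ε⌉ : ℝ) := by linarith
        exact_mod_cast this
    exact (Set.Finite.pi fun _ => Set.finite_Icc _ _).subset hsub2
  set T : Finset (Fin 3 → ℤ) := hSfin.toFinset with hT
  have hTmem : ∀ ℓ, ℓ ∈ T ↔ cellY ε ℓ ⊆ Ω := by
    intro ℓ; rw [hT, Set.Finite.mem_toFinset]; rfl
  have hOm : OmegaMinus Ω ε = ⋃ ℓ ∈ T, cellY ε ℓ := by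
    ext x
    simp only [OmegaMinus, Set.mem_iUnion, Set.mem_setOf_eq, exists_prop]
    constructor
    · rintro ⟨ℓ, h1, h2⟩; exact ⟨ℓ, (hTmem ℓ).2 h1, h2⟩
    · rintro ⟨ℓ, h1, h2⟩; exact ⟨ℓ, (hTmem ℓ).1 h1, h2⟩
  have hdisj : (↑T : Set (Fin 3 → ℤ)).Pairwise (Function.onFun Disjoint (cellY ε)) :=
    fun a _ b _ hab => cellY_disjoint hε hab
  have hmeascells : ∀ ℓ ∈ T, MeasurableSet (cellY ε ℓ) := fun ℓ _ => measurableSet_cellY ε ℓ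
  have hφcells : ∀ ℓ ∈ T, IntegrableOn φ (cellY ε ℓ) :=
    fun ℓ hℓ => hφ.mono_set ((hTmem ℓ).1 hℓ)
  -- value of the inner integral on each cell
  have hinner : ∀ ℓ ∈ T, ∀ x ∈ cellY ε ℓ,
      (∫ y in Ycell, unfold ε Ω φ x y) = (ε ^ 3)⁻¹ * ∫ z in cellY ε ℓ, φ z := by
    intro ℓ hℓ x hx
    have hxOm : x ∈ OmegaMinus Ω ε := by
      rw [hOm]; exact Set.mem_biUnion hℓ hx
    have : ∀ y : Fin 3 → ℝ, unfold ε Ω φ x y = φ (fun i => ε * (ℓ i : ℝ) + ε * y i) := by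
      intro y
      rw [unfold, Set.indicator_of_mem hxOm]
      congr 1
      funext i
      rw [nint_eq_of_mem hε hx i]
    simp_rw [this]
    exact integral_Ycell hε ℓ φ
  -- the second conjunct
  have h2 : ∫ x in OmegaMinus Ω ε, φ x
      = (∫ x in Ω, φ x) - ∫ x in Ω \ OmegaMinus Ω ε, φ x := by
    have := integral_diff hmeas hφ hsub (f := φ) (μ := volume)
    linarith
  refine ⟨?_, h2⟩
  -- the first conjunct
  have hY1 : (volume Ycell).toReal⁻¹ = 1 := by rw [volume_Ycell]; simp
  rw [hY1, one_mul]
  -- the inner-integral function is the indicator of OmegaMinus of a function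
  set G : (Fin 3 → ℝ) → ℝ :=
    (OmegaMinus Ω ε).indicator
      (fun x => ∫ y in Ycell, φ (fun i => ε * (nint (x i / ε) : ℝ) + ε * y i)) with hG
  have hGeq : ∀ x, (∫ y in Ycell, unfold ε Ω φ x y) = G x := by
    intro x
    by_cases hx : x ∈ OmegaMinus Ω ε
    · rw [hG, Set.indicator_of_mem hx]
      apply setIntegral_congr_fun measurableSet_Ycell
      intro y _
      rw [unfold, Set.indicator_of_mem hx]
    · rw [hG, Set.indicator_of_notMem hx]
      have : ∀ y : Fin 3 → ℝ, unfold ε Ω φ x y = 0 := by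
        intro y; rw [unfold, Set.indicator_of_notMem hx]
      simp_rw [this, integral_zero]
  simp_rw [hGeq]
  rw [hG, setIntegral_indicator hmeas, Set.inter_eq_self_of_subset_right hsub]
  set H : (Fin 3 → ℝ) → ℝ :=
    fun x => ∫ y in Ycell, φ (fun i => ε * (nint (x i / ε) : ℝ) + ε * y i) with hH
  have hHcell : ∀ ℓ ∈ T, ∀ x ∈ cellY ε ℓ, H x = (ε ^ 3)⁻¹ * ∫ z in cellY ε ℓ, φ z := by
    intro ℓ hℓ x hx
    rw [hH]
    have : ∀ y : Fin 3 → ℝ,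
        φ (fun i => ε * (nint (x i / ε) : ℝ) + ε * y i)
          = φ (fun i => ε * (ℓ i : ℝ) + ε * y i) := by
      intro y; congr 1; funext i; rw [nint_eq_of_mem hε hx i]
    simp_rw [this]
    exact integral_Ycell hε ℓ φ
  have hHint : ∀ ℓ ∈ T, IntegrableOn H (cellY ε ℓ) := by
    intro ℓ hℓ
    have hconst : IntegrableOn (fun _ : Fin 3 → ℝ => (ε ^ 3)⁻¹ * ∫ z in cellY ε ℓ, φ z)
        (cellY ε ℓ) := by
      exact integrableOn_const (by rw [volume_cellY hε]; exact ENNReal.ofReal_ne_top)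
    exact hconst.congr_fun (fun x hx => (hHcell ℓ hℓ x hx).symm) (measurableSet_cellY ε ℓ)
  rw [hOm, integral_biUnion_finset T hmeascells hdisj hHint,
    integral_biUnion_finset T hmeascells hdisj hφcells]
  apply Finset.sum_congr rfl
  intro ℓ hℓ
  rw [setIntegral_congr_fun (measurableSet_cellY ε ℓ) (hHcell ℓ hℓ), setIntegral_const,
    measureReal_def, volume_cellY hε, ENNReal.toReal_ofReal (pow_nonneg hε.le 3), smul_eq_mul]
  rw [← mul_assoc, mul_inv_cancel₀ (by positivity), one_mul]
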